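/- Let ν be a non-integral real number and m a positive integer. The system ν/a₁ + m/(a₁-1) - 2/(a₁-a₂) = 0 and ν/a₂ + m/(a₂-1) - 2/(a₂-a₁) = 0 for distinct a₁, a₂ ∈ ℂ \ {0,1} has a solution if and only if m ≠ 1. -/
import Mathlib

lemma resN2_key (ν μ s t d a b : ℂ) (hd : d^2 = s^2 - 4*t)
    (ha : a = (s+d)/2) (hb : b = (s-d)/2)
    (hs : (ν+μ-2)*s = 2*(ν-1)) (ht : 2*(ν+μ-1)*t = ν*s)
    (ha0 : a ≠ 0) (ha1 : a - 1 ≠ 0) (hab : a - b ≠ 0) :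
    ν/a + μ/(a-1) - 2/(a-b) = 0 := by
  field_simp
  subst ha hb
  linear_combination ((s+d)/2)*hs + ((ν+μ-1)/2)*hd - ht

theorem residue_equation_N2 (ν : ℝ) (hν : ¬∃ n : ℤ, ν = n) (m : ℕ) (hm : 0 < m) :
    (∃ a₁ a₂ : ℂ, a₁ ≠ a₂ ∧ a₁ ≠ 0 ∧ a₁ ≠ 1 ∧ a₂ ≠ 0 ∧ a₂ ≠ 1 ∧
        (ν : ℂ) / a₁ + (m : ℂ) / (a₁ - 1) - 2 / (a₁ - a₂) = 0 ∧
        (ν : ℂ) / a₂ + (m : ℂ) / (a₂ - 1) - 2 / (a₂ - a₁) = 0) ↔ m ≠ 1 := by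
  have hint : ∀ n : ℤ, (ν : ℂ) ≠ (n : ℂ) := by
    intro n h
    exact hν ⟨n, by exact_mod_cast h⟩
  constructor
  · rintro ⟨a₁, a₂, hab, h10, h11, h20, h21, e1, e2⟩ hm1
    subst hm1
    have hd : a₁ - a₂ ≠ 0 := sub_ne_zero.mpr hab
    have hd' : a₂ - a₁ ≠ 0 := sub_ne_zero.mpr hab.symm
    have h11' : a₁ - 1 ≠ 0 := sub_ne_zero.mpr h11
    have h21' : a₂ - 1 ≠ 0 := sub_ne_zero.mpr h21
    have hν0 : (ν : ℂ) ≠ 0 := by simpa using hint 0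
    have hν1 : (ν : ℂ) - 1 ≠ 0 := sub_ne_zero.mpr (by simpa using hint 1)
    -- clear denominators
    rw [div_add_div _ _ h10 h11', div_sub_div _ _ (mul_ne_zero h10 h11') hd,
      div_eq_zero_iff] at e1
    rw [div_add_div _ _ h20 h21', div_sub_div _ _ (mul_ne_zero h20 h21') hd',
      div_eq_zero_iff] at e2
    have E1 : ((ν:ℂ) * (a₁-1) + 1 * a₁) * (a₁ - a₂) - a₁*(a₁-1)*2 = 0 := by
      rcases e1 with h | h
      · push_cast at h ⊢; linear_combination h
      · exact absurd h (mul_ne_zero (mul_ne_zero h10 h11') hd)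
    have E2 : ((ν:ℂ) * (a₂-1) + 1 * a₂) * (a₂ - a₁) - a₂*(a₂-1)*2 = 0 := by
      rcases e2 with h | h
      · push_cast at h ⊢; linear_combination h
      · exact absurd h (mul_ne_zero (mul_ne_zero h20 h21') hd')
    have hsum : a₁ + a₂ - 2 = 0 := by
      have h : (a₁ - a₂) * (((ν:ℂ) - 1) * (a₁ + a₂ - 2)) = 0 := by
        linear_combination E1 - E2
      rcases mul_eq_zero.mp h with h | h
      · exact absurd h hd
      · rcases mul_eq_zero.mp h with h | h
        · exact absurd h hν1
        · exact h
    have hfin : (ν:ℂ) * (a₁ - a₂)^2 = 0 := by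
      linear_combination E1 + E2 + (a₁ + a₂) * hsum
    rcases mul_eq_zero.mp hfin with h | h
    · exact hν0 h
    · exact hd (pow_eq_zero_iff (by norm_num) |>.mp h)
  · intro hm1
    set μ : ℂ := (m : ℂ) with hμ
    have hD1 : (ν:ℂ) + μ - 2 ≠ 0 := by
      intro h
      exact hint (2 - m) (by push_cast; linear_combination h)
    have hD2 : (ν:ℂ) + μ - 1 ≠ 0 := by
      intro h
      exact hint (1 - m) (by push_cast; linear_combination h)
    have hν0 : (ν : ℂ) ≠ 0 := by simpa using hint 0
    have hν1 : (ν : ℂ) - 1 ≠ 0 := sub_ne_zero.mpr (by simpa using hint 1)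
    have hμ0 : μ ≠ 0 := by rw [hμ]; exact_mod_cast hm.ne'
    have hμ1 : μ - 1 ≠ 0 := by
      rw [sub_ne_zero, hμ]
      exact_mod_cast hm1
    have h1μ : 1 - μ ≠ 0 := fun h => hμ1 (by linear_combination -h)
    set s : ℂ := 2*((ν:ℂ)-1)/((ν:ℂ)+μ-2) with hs_def
    set t : ℂ := (ν:ℂ)*s/(2*((ν:ℂ)+μ-1)) with ht_def
    have hs : ((ν:ℂ)+μ-2)*s = 2*((ν:ℂ)-1) := by
      rw [hs_def]; field_simp
    have ht : 2*((ν:ℂ)+μ-1)*t = (ν:ℂ)*s := by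
      rw [ht_def]; field_simp
    have hs0 : s ≠ 0 := by
      intro h
      apply hν1
      have := hs
      rw [h, mul_zero] at this
      linear_combination -this/2
    have ht0 : t ≠ 0 := by
      rw [ht_def]
      exact div_ne_zero (mul_ne_zero hν0 hs0) (by
        intro h
        exact hD2 (by linear_combination h/2))
    have hdisc : s^2 - 4*t = 4*((ν:ℂ)-1)*(1-μ)/(((ν:ℂ)+μ-2)^2*((ν:ℂ)+μ-1)) := by
      rw [hs_def, ht_def, hs_def]
      field_simp
      ring
    have hdisc0 : s^2 - 4*t ≠ 0 := by
      rw [hdisc]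
      exact div_ne_zero (mul_ne_zero (mul_ne_zero (by norm_num) hν1) h1μ)
        (mul_ne_zero (pow_ne_zero _ hD1) hD2)
    obtain ⟨d, hd⟩ : ∃ d : ℂ, d^2 = s^2 - 4*t := by
      obtain ⟨d, hd⟩ := IsAlgClosed.exists_pow_nat_eq (s^2 - 4*t) (n := 2) (by norm_num)
      exact ⟨d, hd⟩
    have hd0 : d ≠ 0 := fun h => hdisc0 (by rw [← hd, h]; ring)
    set a₁ : ℂ := (s+d)/2 with ha1_def
    set a₂ : ℂ := (s-d)/2 with ha2_def
    have hsub : a₁ - a₂ = d := by rw [ha1_def, ha2_def]; ring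
    have hsub' : a₂ - a₁ = -d := by rw [ha1_def, ha2_def]; ring
    have hab : a₁ ≠ a₂ := fun h => hd0 (by rw [← hsub, h, sub_self])
    have hprod : a₁ * a₂ = t := by
      rw [ha1_def, ha2_def]
      field_simp
      linear_combination -hd
    have hprod1 : (a₁ - 1) * (a₂ - 1) = μ*(μ-1)/(((ν:ℂ)+μ-2)*((ν:ℂ)+μ-1)) := by
      have h : (a₁ - 1) * (a₂ - 1) = t - s + 1 := by
        rw [ha1_def, ha2_def]
        field_simp
        linear_combination -hd
      rw [h, ht_def, hs_def]
      field_simp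
      ring
    have h10 : a₁ ≠ 0 := by
      intro h; apply ht0; rw [← hprod, h, zero_mul]
    have h20 : a₂ ≠ 0 := by
      intro h; apply ht0; rw [← hprod, h, mul_zero]
    have hprod1' : (a₁ - 1) * (a₂ - 1) ≠ 0 := by
      rw [hprod1]
      exact div_ne_zero (mul_ne_zero hμ0 hμ1) (mul_ne_zero hD1 hD2)
    have h11 : a₁ ≠ 1 := fun h => hprod1' (by rw [h, sub_self, zero_mul])
    have h21 : a₂ ≠ 1 := fun h => hprod1' (by rw [h, sub_self, mul_zero])
    refine ⟨a₁, a₂, hab, h10, h11, h20, h21, ?_, ?_⟩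
    · exact resN2_key (ν:ℂ) μ s t d a₁ a₂ hd ha1_def ha2_def hs ht h10
        (sub_ne_zero.mpr h11) (by rw [hsub]; exact hd0)
    · refine resN2_key (ν:ℂ) μ s t (-d) a₂ a₁ (by rw [neg_pow]; simpa using hd)
        (by rw [ha2_def]; ring) (by rw [ha1_def]; ring) hs ht h20
        (sub_ne_zero.mpr h21) (by rw [hsub']; simpa using hd0)
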